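/- arXiv:2503.09921 — 2 statements merged into one kernel-verified Lean document; each statement's English description precedes it below -/
import Mathlib

section
/- With notation as in the standing completion setup: the ring homomorphism R → eR̂ given by r ↦ e·(image of r in R̂) sends z to a topologically nilpotent element and induces a ring isomorphism from the (z)-adic completion R̂_z of R onto the corner ring eR̂. Moreover, for each n ≥ 1 the induced map R/(zⁿ) → eR̂/(e·τⁿ·R̂ ∩ eR̂) is an isomorphism, and the image of e in R/(τⁿ) equals the idempotent e_n corresponding to the projection onto R/(zⁿ) under the Chinese remainder isomorphism R/(τⁿ) ≅ R/(zⁿ) × R/(φ(z)ⁿ) × ⋯ × R/(φ^{l−1}(z)ⁿ). -/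
universe u

section CompletionSetup

variable (R : Type u) [CommRing R] (φ : R ≃+* R) (z : R) (l : ℕ)

/-- The element `τ = z·φ(z)·φ²(z)⋯φ^{l−1}(z)`. -/
noncomputable def gwaTau : R := ∏ i ∈ Finset.range l, (φ ^ i) z

/-- The `(τ)`-adic completion `R̂` of `R`. -/
noncomputable abbrev RHat : Type u := AdicCompletion (Ideal.span {gwaTau R φ z l}) R

/-- The evaluation (projection) map `R̂ → R/(τⁿ)` from the `(τ)`-adic completion. -/
noncomputable def RHat.proj (n : ℕ) :
    RHat R φ z l →ₗ[R]
      R ⧸ ((Ideal.span {gwaTau R φ z l}) ^ n • ⊤ : Submodule R R) :=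
  AdicCompletion.eval (Ideal.span {gwaTau R φ z l}) R n

end CompletionSetup

theorem AdicCompletion.transitionMap_mk {R : Type*} [CommRing R] {I : Ideal R} {M : Type*}
    [AddCommGroup M] [Module R M] {m n : ℕ} (hmn : m ≤ n) (x : M) :
    AdicCompletion.transitionMap I M hmn
      (Submodule.Quotient.mk (p := (I ^ n • ⊤ : Submodule R M)) x) =
      Submodule.Quotient.mk (p := (I ^ m • ⊤ : Submodule R M)) x := rfl

namespace Stmt14Aux

open AdicCompletion

variable {R : Type u} [CommRing R]

theorem smul_top_singleton (t : R) (n : ℕ) :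
    ((Ideal.span {t}) ^ n • ⊤ : Submodule R R) = Ideal.span {t ^ n} := by
  rw [smul_eq_mul, Ideal.mul_top, Ideal.span_singleton_pow]

theorem mk_mul (J : Submodule R R) (a b : R) :
    (Submodule.Quotient.mk a : R ⧸ J) * Submodule.Quotient.mk b
      = Submodule.Quotient.mk (a * b) := rfl

theorem algebraMap_val (I : Ideal R) (r : R) (n : ℕ) :
    (algebraMap R (AdicCompletion I R) r).val n = Submodule.Quotient.mk r := rfl

theorem mk_pow_eq_zero (t : R) (n : ℕ) :
    (Submodule.Quotient.mk (t ^ n) :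
      R ⧸ ((Ideal.span {t}) ^ n • ⊤ : Submodule R R)) = 0 :=
  (Submodule.Quotient.mk_eq_zero _).mpr (by
    rw [smul_top_singleton]; exact Ideal.subset_span rfl)

/-- Key lemma: the kernel of `eval n` is `t^n · (completion)`. -/
theorem exists_of_eval_eq_zero {t : R} (ht : t ∈ nonZeroDivisors R) (n : ℕ)
    (x : AdicCompletion (Ideal.span {t}) R)
    (hx : eval (Ideal.span {t}) R n x = 0) :
    ∃ y, x = algebraMap R (AdicCompletion (Ideal.span {t}) R) (t ^ n) * y := by
  classical
  have hxv : x.val n = 0 := hx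
  have hlift : ∀ k : ℕ, ∃ r : R, Submodule.Quotient.mk r = x.val (n + k) := fun k =>
    Submodule.Quotient.mk_surjective _ _
  choose r hr using hlift
  have key : ∀ {m k : ℕ}, m ≤ n + k →
      x.val m = (Submodule.Quotient.mk (r k) :
        R ⧸ ((Ideal.span {t}) ^ m • ⊤ : Submodule R R)) := by
    intro m k h
    rw [← x.2 h, ← hr k, transitionMap_mk]
  have hdiv : ∀ k : ℕ, ∃ c : R, r k = t ^ n * c := by
    intro k
    have h1 : (Submodule.Quotient.mk (r k) :
        R ⧸ ((Ideal.span {t}) ^ n • ⊤ : Submodule R R)) = 0 := by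
      rw [← key (Nat.le_add_right n k), hxv]
    have h2 := (Submodule.Quotient.mk_eq_zero _).mp h1
    rw [smul_top_singleton] at h2
    exact Ideal.mem_span_singleton.mp h2
  choose c hc using hdiv
  have hcompat : ∀ {m k : ℕ}, m ≤ k → ∃ d : R, c k - c m = t ^ m * d := by
    intro m k hmk
    have h1 : (Submodule.Quotient.mk (r k) :
        R ⧸ ((Ideal.span {t}) ^ (n + m) • ⊤ : Submodule R R)) = Submodule.Quotient.mk (r m) := by
      rw [← key (Nat.add_le_add_left hmk n), ← key (le_refl (n + m))]
    have h2 := (Submodule.Quotient.eq _).mp h1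
    rw [smul_top_singleton] at h2
    obtain ⟨d, hd⟩ := Ideal.mem_span_singleton.mp h2
    refine ⟨d, ?_⟩
    have htn := pow_mem ht n
    have h5 : (c k - c m - t ^ m * d) * t ^ n = 0 := by
      have h3 : t ^ n * c k - t ^ n * c m = t ^ (n + m) * d := by
        rw [← hc k, ← hc m]; exact hd
      rw [pow_add] at h3
      linear_combination h3
    have h6 := mem_nonZeroDivisors_iff_right.mp htn _ h5
    linear_combination h6
  have hmem : ∀ {m k : ℕ}, m ≤ k → c k - c m ∈ ((Ideal.span {t}) ^ m • ⊤ : Submodule R R) := by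
    intro m k hmk
    obtain ⟨d, hd⟩ := hcompat hmk
    rw [smul_top_singleton]
    exact Ideal.mem_span_singleton.mpr ⟨d, hd⟩
  refine ⟨(⟨fun k => Submodule.Quotient.mk (c k), ?_⟩ : AdicCompletion (Ideal.span {t}) R), ?_⟩
  · intro m k hmk
    rw [transitionMap_mk]
    exact (Submodule.Quotient.eq _).mpr (hmem hmk)
  · ext k
    rw [key (Nat.le_add_left k n)]
    erw [val_mul, algebraMap_val]
    show _ = Submodule.Quotient.mk (t ^ n) * Submodule.Quotient.mk (c k)
    rw [mk_mul, ← hc]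

theorem pow_trick (J : Ideal R) (u x : R) (n : ℕ) (hn : 1 ≤ n)
    (hidem : u * u - u ∈ J) (hxpow : x ^ n ∈ J) (hux : x ∣ u) : u ∈ J := by
  have hk : ∀ k : ℕ, 1 ≤ k → u ^ k - u ∈ J := by
    intro k hk1
    induction k with
    | zero => omega
    | succ m ih =>
      rcases Nat.eq_zero_or_pos m with rfl | hm
      · simp
      · have h1 := ih hm
        have h2 : u ^ (m + 1) - u = u * (u ^ m - u) + (u * u - u) := by ring
        rw [h2]
        exact add_mem (J.mul_mem_left u h1) hidem
  obtain ⟨d, rfl⟩ := hux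
  have h2 : (x * d) ^ n ∈ J := by
    rw [mul_pow]
    exact J.mul_mem_right _ hxpow
  have h3 := hk n hn
  have h4 : x * d = (x * d) ^ n - ((x * d) ^ n - x * d) := by ring
  rw [h4]
  exact sub_mem h2 h3

theorem mem_of_eq {α : Type u} [CommRing α] {I : Ideal α} {a b : α} (h : a = b)
    (hb : b ∈ I) : a ∈ I := by rw [h]; exact hb

/-- A choice of lift to `R` of the `k`-th component of an element of an adic completion. -/
noncomputable def rlift {I : Ideal R} (x : AdicCompletion I R) (k : ℕ) : R :=
  (Submodule.Quotient.mk_surjective (I ^ k • ⊤ : Submodule R R) (x.val k)).choose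

theorem rlift_spec {I : Ideal R} (x : AdicCompletion I R) (k : ℕ) :
    (Submodule.Quotient.mk (rlift x k) : R ⧸ (I ^ k • ⊤ : Submodule R R)) = x.val k :=
  (Submodule.Quotient.mk_surjective (I ^ k • ⊤ : Submodule R R) (x.val k)).choose_spec

theorem rlift_sub_mem {w : R} (x : AdicCompletion (Ideal.span {w}) R) {m k : ℕ} (hmk : m ≤ k) :
    rlift x k - rlift x m ∈ Ideal.span {w ^ m} := by
  have h2 : (Submodule.Quotient.mk (rlift x k) :
      R ⧸ ((Ideal.span {w}) ^ m • ⊤ : Submodule R R)) = Submodule.Quotient.mk (rlift x m) := by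
    rw [rlift_spec x m, ← x.2 hmk, ← rlift_spec x k, transitionMap_mk]
  have h3 := (Submodule.Quotient.eq _).mp h2
  rwa [smul_top_singleton] at h3

theorem rlift_sub_mem' {w : R} (x : AdicCompletion (Ideal.span {w}) R) (k : ℕ) (s : R)
    (hs : x.val k = Submodule.Quotient.mk s) :
    rlift x k - s ∈ Ideal.span {w ^ k} := by
  have h2 : (Submodule.Quotient.mk (rlift x k) :
      R ⧸ ((Ideal.span {w}) ^ k • ⊤ : Submodule R R)) = Submodule.Quotient.mk s := by
    rw [rlift_spec x k, hs]
  have h3 := (Submodule.Quotient.eq _).mp h2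
  rwa [smul_top_singleton] at h3

section Corner

variable (t z : R)

theorem key0 (e : AdicCompletion (Ideal.span {t}) R)
    (cz : ℕ → AdicCompletion (Ideal.span {t}) R)
    (hcz : ∀ n : ℕ, e * algebraMap R (AdicCompletion (Ideal.span {t}) R) (z ^ n)
      = algebraMap R (AdicCompletion (Ideal.span {t}) R) (t ^ n) * cz n)
    (k : ℕ) (s s' : R) (hss : s - s' ∈ Ideal.span {z ^ k}) :
    (e * algebraMap R (AdicCompletion (Ideal.span {t}) R) s).val k
      = (e * algebraMap R (AdicCompletion (Ideal.span {t}) R) s').val k := by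
  obtain ⟨d, hd⟩ := Ideal.mem_span_singleton.mp hss
  have h1 : algebraMap R (AdicCompletion (Ideal.span {t}) R) s
      - algebraMap R (AdicCompletion (Ideal.span {t}) R) s'
      = algebraMap R (AdicCompletion (Ideal.span {t}) R) (z ^ k)
        * algebraMap R (AdicCompletion (Ideal.span {t}) R) d := by
    rw [← map_sub, hd, map_mul]
  have hsub : e * algebraMap R (AdicCompletion (Ideal.span {t}) R) s
      - e * algebraMap R (AdicCompletion (Ideal.span {t}) R) s'
      = algebraMap R (AdicCompletion (Ideal.span {t}) R) (t ^ k)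
        * (cz k * algebraMap R (AdicCompletion (Ideal.span {t}) R) d) := by
    linear_combination e * h1 + (algebraMap R (AdicCompletion (Ideal.span {t}) R) d) * hcz k
  have h2 : (algebraMap R (AdicCompletion (Ideal.span {t}) R) (t ^ k)
      * (cz k * algebraMap R (AdicCompletion (Ideal.span {t}) R) d)).val k = 0 := by
    rw [val_mul, algebraMap_val, mk_pow_eq_zero, zero_mul]
  have h3 : (e * algebraMap R (AdicCompletion (Ideal.span {t}) R) s).val k
      - (e * algebraMap R (AdicCompletion (Ideal.span {t}) R) s').val k = 0 := by
    rw [← val_sub_apply, hsub, h2]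
  exact sub_eq_zero.mp h3

/-- The element of the `t`-adic completion obtained from an element of the `z`-adic
completion by multiplying (compatible lifts) by the idempotent `e`. -/
noncomputable def aelem (e : AdicCompletion (Ideal.span {t}) R)
    (cz : ℕ → AdicCompletion (Ideal.span {t}) R)
    (hcz : ∀ n : ℕ, e * algebraMap R (AdicCompletion (Ideal.span {t}) R) (z ^ n)
      = algebraMap R (AdicCompletion (Ideal.span {t}) R) (t ^ n) * cz n)
    (x : AdicCompletion (Ideal.span {z}) R) : AdicCompletion (Ideal.span {t}) R :=
  ⟨fun k => (e * algebraMap R (AdicCompletion (Ideal.span {t}) R) (rlift x k)).val k, by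
    intro m k hmk
    rw [(e * algebraMap R (AdicCompletion (Ideal.span {t}) R) (rlift x k)).2 hmk]
    exact key0 t z e cz hcz m _ _ (rlift_sub_mem x hmk)⟩

theorem aelem_val (e : AdicCompletion (Ideal.span {t}) R)
    (cz : ℕ → AdicCompletion (Ideal.span {t}) R)
    (hcz : ∀ n : ℕ, e * algebraMap R (AdicCompletion (Ideal.span {t}) R) (z ^ n)
      = algebraMap R (AdicCompletion (Ideal.span {t}) R) (t ^ n) * cz n)
    (x : AdicCompletion (Ideal.span {z}) R) (k : ℕ) :
    (aelem t z e cz hcz x).val k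
      = (e * algebraMap R (AdicCompletion (Ideal.span {t}) R) (rlift x k)).val k := rfl

theorem aelem_key (e : AdicCompletion (Ideal.span {t}) R)
    (cz : ℕ → AdicCompletion (Ideal.span {t}) R)
    (hcz : ∀ n : ℕ, e * algebraMap R (AdicCompletion (Ideal.span {t}) R) (z ^ n)
      = algebraMap R (AdicCompletion (Ideal.span {t}) R) (t ^ n) * cz n)
    (x : AdicCompletion (Ideal.span {z}) R) (k : ℕ) (s : R)
    (hs : x.val k = Submodule.Quotient.mk s) :
    (aelem t z e cz hcz x).val k
      = (e * algebraMap R (AdicCompletion (Ideal.span {t}) R) s).val k := by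
  rw [aelem_val]
  exact key0 t z e cz hcz k _ _ (rlift_sub_mem' x k s hs)



set_option maxHeartbeats 1000000 in
set_option synthInstance.maxHeartbeats 400000 in
theorem corner (ht : t ∈ nonZeroDivisors R) (hzt : z ∣ t)
    (e : AdicCompletion (Ideal.span {t}) R) (he : e * e = e)
    (H1 : ∃ c, e * algebraMap R (AdicCompletion (Ideal.span {t}) R) z
        = algebraMap R (AdicCompletion (Ideal.span {t}) R) t * c)
    (Hker : ∀ n : ℕ, 1 ≤ n → ∀ r : R,
      (∃ a, e * algebraMap R (AdicCompletion (Ideal.span {t}) R) r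
          = algebraMap R (AdicCompletion (Ideal.span {t}) R) (t ^ n) * a) →
      r ∈ Ideal.span {z ^ n}) :
    (∀ n : ℕ, ∃ m : ℕ,
      (Ideal.Quotient.mk (Ideal.span {1 - e})
          (algebraMap R (AdicCompletion (Ideal.span {t}) R) z)) ^ m ∈
        (Ideal.span {Ideal.Quotient.mk (Ideal.span {1 - e})
          (algebraMap R (AdicCompletion (Ideal.span {t}) R) t)}) ^ n) ∧
    (∃ g : AdicCompletion (Ideal.span {z}) R ≃+*
        (AdicCompletion (Ideal.span {t}) R ⧸ Ideal.span {1 - e}),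
      (∀ r : R, g (algebraMap R (AdicCompletion (Ideal.span {z}) R) r) =
        Ideal.Quotient.mk (Ideal.span {1 - e})
          (algebraMap R (AdicCompletion (Ideal.span {t}) R) r)) ∧
      (∀ n : ℕ, ∃ m : ℕ, ∀ x : AdicCompletion (Ideal.span {z}) R,
        AdicCompletion.eval (Ideal.span {z}) R m x = 0 →
          g x ∈ (Ideal.span {Ideal.Quotient.mk (Ideal.span {1 - e})
            (algebraMap R (AdicCompletion (Ideal.span {t}) R) t)}) ^ n)) ∧
    (∀ n : ℕ, 1 ≤ n →
      ∃ gn : (R ⧸ Ideal.span {z ^ n}) ≃+*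
          ((AdicCompletion (Ideal.span {t}) R ⧸ Ideal.span {1 - e}) ⧸
            Ideal.span {(Ideal.Quotient.mk (Ideal.span {1 - e})
              (algebraMap R (AdicCompletion (Ideal.span {t}) R) t)) ^ n}),
        ∀ r : R, gn (Ideal.Quotient.mk (Ideal.span {z ^ n}) r) =
          Ideal.Quotient.mk _ (Ideal.Quotient.mk (Ideal.span {1 - e})
            (algebraMap R (AdicCompletion (Ideal.span {t}) R) r))) := by
  classical
  have h1eE : (1 - e) ∈ Ideal.span {1 - e} := Ideal.subset_span rfl
  obtain ⟨c1, hc1⟩ := H1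
  have hepow : ∀ n : ℕ, 1 ≤ n → e ^ n = e := by
    intro n hn
    induction n with
    | zero => omega
    | succ m ih =>
      rcases Nat.eq_zero_or_pos m with rfl | hm
      · simp
      · rw [pow_succ, ih hm, he]
  have hezn : ∀ n : ℕ, ∃ c, e * algebraMap R (AdicCompletion (Ideal.span {t}) R) (z ^ n)
      = algebraMap R (AdicCompletion (Ideal.span {t}) R) (t ^ n) * c := by
    intro n
    rcases Nat.eq_zero_or_pos n with rfl | hn
    · exact ⟨e, by simp [mul_comm]⟩
    · refine ⟨c1 ^ n, ?_⟩
      have h1 : (e * algebraMap R (AdicCompletion (Ideal.span {t}) R) z) ^ n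
          = (algebraMap R (AdicCompletion (Ideal.span {t}) R) t * c1) ^ n := by rw [hc1]
      rw [mul_pow, mul_pow, hepow n hn] at h1
      rw [_root_.map_pow, _root_.map_pow]
      exact h1
  choose cz hcz using hezn
  have hπ : ∀ x, Ideal.Quotient.mk (Ideal.span {1 - e}) (e * x)
      = Ideal.Quotient.mk (Ideal.span {1 - e}) x := by
    intro x
    rw [Ideal.Quotient.eq]
    exact Ideal.mem_span_singleton.mpr ⟨-x, by ring⟩
  have hπe : Ideal.Quotient.mk (Ideal.span {1 - e}) e = 1 := by
    have h1 : Ideal.Quotient.mk (Ideal.span {1 - e}) e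
        = Ideal.Quotient.mk (Ideal.span {1 - e}) 1 := by
      rw [Ideal.Quotient.eq]
      have h2 : e - 1 = -(1 - e) := by ring
      rw [h2]
      exact neg_mem h1eE
    rw [h1, map_one]
  -- conjunct 1
  refine ⟨?_, ?_, ?_⟩
  · intro n
    refine ⟨n, ?_⟩
    have hq := congrArg (Ideal.Quotient.mk (Ideal.span {1 - e})) (hcz n)
    rw [hπ] at hq
    have h2 : (Ideal.Quotient.mk (Ideal.span {1 - e})
          (algebraMap R (AdicCompletion (Ideal.span {t}) R) z)) ^ n
        = (Ideal.Quotient.mk (Ideal.span {1 - e})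
            (algebraMap R (AdicCompletion (Ideal.span {t}) R) t)) ^ n
          * Ideal.Quotient.mk (Ideal.span {1 - e}) (cz n) := by
      calc (Ideal.Quotient.mk (Ideal.span {1 - e})
            (algebraMap R (AdicCompletion (Ideal.span {t}) R) z)) ^ n
          = Ideal.Quotient.mk (Ideal.span {1 - e})
            (algebraMap R (AdicCompletion (Ideal.span {t}) R) (z ^ n)) := by
            rw [_root_.map_pow, _root_.map_pow]
        _ = Ideal.Quotient.mk (Ideal.span {1 - e})
            (algebraMap R (AdicCompletion (Ideal.span {t}) R) (t ^ n) * cz n) := hq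
        _ = _ := by rw [_root_.map_mul, _root_.map_pow, _root_.map_pow]
    have hx : (Ideal.Quotient.mk (Ideal.span {1 - e})
            (algebraMap R (AdicCompletion (Ideal.span {t}) R) t)) ∈ Ideal.span {Ideal.Quotient.mk (Ideal.span {1 - e})
            (algebraMap R (AdicCompletion (Ideal.span {t}) R) t)} := Ideal.subset_span rfl
    have hxn := Ideal.pow_mem_pow hx n
    exact mem_of_eq h2 (Ideal.mul_mem_right _ _ hxn)
  -- conjunct 2
  · have eaelem : ∀ x, e * aelem t z e cz hcz x = aelem t z e cz hcz x := by
      intro x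
      ext k
      calc (e * aelem t z e cz hcz x).val k
          = e.val k * (aelem t z e cz hcz x).val k := val_mul _ k _ _
        _ = e.val k * (e * algebraMap R (AdicCompletion (Ideal.span {t}) R) (rlift x k)).val k := by
            rw [aelem_val]
        _ = (e * (e * algebraMap R (AdicCompletion (Ideal.span {t}) R) (rlift x k))).val k := (val_mul _ k _ _).symm
        _ = (e * algebraMap R (AdicCompletion (Ideal.span {t}) R) (rlift x k)).val k := by
            rw [← mul_assoc, he]
        _ = (aelem t z e cz hcz x).val k := (aelem_val t z e cz hcz x k).symm
    have amul : ∀ x y, aelem t z e cz hcz (x * y)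
        = aelem t z e cz hcz x * aelem t z e cz hcz y := by
      intro x y
      ext k
      have h1 : (x * y).val k = Submodule.Quotient.mk (rlift x k * rlift y k) := by
        rw [val_mul, ← rlift_spec x k, ← rlift_spec y k, mk_mul]
      have h2 : e * algebraMap R (AdicCompletion (Ideal.span {t}) R) (rlift x k * rlift y k)
          = (e * algebraMap R (AdicCompletion (Ideal.span {t}) R) (rlift x k)) * (e * algebraMap R (AdicCompletion (Ideal.span {t}) R) (rlift y k)) := by
        rw [_root_.map_mul]
        linear_combination (algebraMap R (AdicCompletion (Ideal.span {t}) R) (rlift x k)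
          * algebraMap R (AdicCompletion (Ideal.span {t}) R) (rlift y k)) * he.symm
      calc (aelem t z e cz hcz (x * y)).val k
          = (e * algebraMap R (AdicCompletion (Ideal.span {t}) R) (rlift x k * rlift y k)).val k :=
            aelem_key t z e cz hcz (x * y) k _ h1
        _ = ((e * algebraMap R (AdicCompletion (Ideal.span {t}) R) (rlift x k))
              * (e * algebraMap R (AdicCompletion (Ideal.span {t}) R) (rlift y k))).val k := by rw [h2]
        _ = (e * algebraMap R (AdicCompletion (Ideal.span {t}) R) (rlift x k)).val k
              * (e * algebraMap R (AdicCompletion (Ideal.span {t}) R) (rlift y k)).val k := val_mul _ k _ _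
        _ = (aelem t z e cz hcz x).val k * (aelem t z e cz hcz y).val k := by
            rw [aelem_val, aelem_val]
        _ = (aelem t z e cz hcz x * aelem t z e cz hcz y).val k := (val_mul _ k _ _).symm
    have aadd : ∀ x y, aelem t z e cz hcz (x + y)
        = aelem t z e cz hcz x + aelem t z e cz hcz y := by
      intro x y
      ext k
      have h1 : (x + y).val k = Submodule.Quotient.mk (rlift x k + rlift y k) := by
        rw [val_add_apply, ← rlift_spec x k, ← rlift_spec y k]
        rfl
      have h2 : e * algebraMap R (AdicCompletion (Ideal.span {t}) R) (rlift x k + rlift y k)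
          = e * algebraMap R (AdicCompletion (Ideal.span {t}) R) (rlift x k) + e * algebraMap R (AdicCompletion (Ideal.span {t}) R) (rlift y k) := by
        rw [_root_.map_add]
        ring
      calc (aelem t z e cz hcz (x + y)).val k
          = (e * algebraMap R (AdicCompletion (Ideal.span {t}) R) (rlift x k + rlift y k)).val k :=
            aelem_key t z e cz hcz (x + y) k _ h1
        _ = (e * algebraMap R (AdicCompletion (Ideal.span {t}) R) (rlift x k)
              + e * algebraMap R (AdicCompletion (Ideal.span {t}) R) (rlift y k)).val k := by rw [h2]
        _ = (e * algebraMap R (AdicCompletion (Ideal.span {t}) R) (rlift x k)).val k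
              + (e * algebraMap R (AdicCompletion (Ideal.span {t}) R) (rlift y k)).val k := val_add_apply _ _ k
        _ = (aelem t z e cz hcz x).val k + (aelem t z e cz hcz y).val k := by
            rw [aelem_val, aelem_val]
        _ = (aelem t z e cz hcz x + aelem t z e cz hcz y).val k := (val_add_apply _ _ k).symm
    have aone : aelem t z e cz hcz 1 = e := by
      ext k
      have h1 : (1 : AdicCompletion (Ideal.span {z}) R).val k = Submodule.Quotient.mk 1 := rfl
      rw [aelem_key t z e cz hcz 1 k 1 h1, _root_.map_one, mul_one]
    have azero : aelem t z e cz hcz 0 = 0 := by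
      ext k
      have h1 : (0 : AdicCompletion (Ideal.span {z}) R).val k = Submodule.Quotient.mk 0 := by
        rw [val_zero_apply, Submodule.Quotient.mk_zero]
      rw [aelem_key t z e cz hcz 0 k 0 h1, _root_.map_zero, mul_zero, val_zero]
    have aalg : ∀ r : R, aelem t z e cz hcz (algebraMap R (AdicCompletion (Ideal.span {z}) R) r)
        = e * algebraMap R (AdicCompletion (Ideal.span {t}) R) r := by
      intro r
      ext k
      exact aelem_key t z e cz hcz _ k r rfl
    set g0 : AdicCompletion (Ideal.span {z}) R →+*
        (AdicCompletion (Ideal.span {t}) R ⧸ Ideal.span {1 - e}) :=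
      { toFun := fun x => Ideal.Quotient.mk (Ideal.span {1 - e}) (aelem t z e cz hcz x)
        map_one' := by
          show Ideal.Quotient.mk (Ideal.span {1 - e}) (aelem t z e cz hcz 1) = 1
          rw [aone, hπe]
        map_mul' := fun x y => by
          show Ideal.Quotient.mk (Ideal.span {1 - e}) (aelem t z e cz hcz (x * y)) = _
          rw [amul, _root_.map_mul]
        map_zero' := by
          show Ideal.Quotient.mk (Ideal.span {1 - e}) (aelem t z e cz hcz 0) = 0
          rw [azero, _root_.map_zero]
        map_add' := fun x y => by
          show Ideal.Quotient.mk (Ideal.span {1 - e}) (aelem t z e cz hcz (x + y)) = _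
          rw [aadd, _root_.map_add] } with hg0
    have hg0x : ∀ x, g0 x = Ideal.Quotient.mk (Ideal.span {1 - e}) (aelem t z e cz hcz x) :=
      fun x => rfl
    have hinj : Function.Injective g0 := by
      rw [injective_iff_map_eq_zero]
      intro x hx
      rw [hg0x] at hx
      obtain ⟨u, hu⟩ := Ideal.mem_span_singleton.mp (Ideal.Quotient.eq_zero_iff_mem.mp hx)
      have h2 : aelem t z e cz hcz x = 0 := by
        rw [← eaelem x, hu]
        have h3 : e * ((1 - e) * u) = (e - e * e) * u := by ring
        rw [h3, he, sub_self, zero_mul]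
      have h4 : ∀ k : ℕ, 1 ≤ k → x.val k = 0 := by
        intro k hk
        have h5 : eval (Ideal.span {t}) R k
            (e * algebraMap R (AdicCompletion (Ideal.span {t}) R) (rlift x k)) = 0 := by
          show (e * algebraMap R (AdicCompletion (Ideal.span {t}) R) (rlift x k)).val k = 0
          rw [← aelem_val t z e cz hcz x k, h2, val_zero_apply]
        obtain ⟨y, hy⟩ := exists_of_eval_eq_zero ht k _ h5
        have h6 := Hker k hk (rlift x k) ⟨y, hy⟩
        rw [← rlift_spec x k, Submodule.Quotient.mk_eq_zero, smul_top_singleton]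
        exact h6
      ext k
      rcases Nat.eq_zero_or_pos k with rfl | hk
      · rw [← x.2 (Nat.zero_le 1), h4 1 le_rfl, _root_.map_zero, val_zero_apply]
      · rw [h4 k hk, val_zero_apply]
    have hsurj : Function.Surjective g0 := by
      intro q
      obtain ⟨x0, rfl⟩ := Ideal.Quotient.mk_surjective q
      have hcompatB : ∀ {m k : ℕ} (hmk : m ≤ k),
          transitionMap (Ideal.span {z}) R hmk
            (Submodule.Quotient.mk (rlift x0 k)) = Submodule.Quotient.mk (rlift x0 m) := by
        intro m k hmk
        rw [transitionMap_mk]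
        refine (Submodule.Quotient.eq _).mpr ?_
        rw [smul_top_singleton]
        exact Ideal.span_singleton_le_span_singleton.mpr
          (pow_dvd_pow_of_dvd hzt m) (rlift_sub_mem x0 hmk)
      refine ⟨(⟨fun k => Submodule.Quotient.mk (rlift x0 k), fun {m k} hmk => hcompatB hmk⟩ :
        AdicCompletion (Ideal.span {z}) R), ?_⟩
      erw [hg0x]
      have h7 : aelem t z e cz hcz
          (⟨fun k => Submodule.Quotient.mk (rlift x0 k), fun {m k} hmk => hcompatB hmk⟩ :
            AdicCompletion (Ideal.span {z}) R)
          = e * x0 := by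
        ext k
        erw [aelem_key t z e cz hcz
          ⟨fun k => Submodule.Quotient.mk (rlift x0 k), fun {m k} hmk => hcompatB hmk⟩ k
          (rlift x0 k) rfl]
        rw [val_mul, val_mul,
          algebraMap_val, rlift_spec]
      rw [h7, hπ]
    refine ⟨RingEquiv.ofBijective g0 ⟨hinj, hsurj⟩, ?_, ?_⟩
    · intro r
      show g0 _ = _
      rw [hg0x, aalg, hπ]
    · intro n
      refine ⟨n, ?_⟩
      intro x hx
      have h1 : x.val n = Submodule.Quotient.mk 0 := by
        have : x.val n = 0 := hx
        rw [this]
        symm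
        rw [Submodule.Quotient.mk_eq_zero]
        exact zero_mem _
      have h2 : eval (Ideal.span {t}) R n (aelem t z e cz hcz x) = 0 := by
        show (aelem t z e cz hcz x).val n = 0
        rw [aelem_key t z e cz hcz x n 0 h1, _root_.map_zero, mul_zero, val_zero_apply]
      obtain ⟨y, hy⟩ := exists_of_eval_eq_zero ht n _ h2
      show g0 x ∈ _
      have h3 : g0 x = (Ideal.Quotient.mk (Ideal.span {1 - e})
            (algebraMap R (AdicCompletion (Ideal.span {t}) R) t)) ^ n
          * Ideal.Quotient.mk (Ideal.span {1 - e}) y := by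
        rw [hg0x, hy, _root_.map_mul, _root_.map_pow, _root_.map_pow]
      have hx : (Ideal.Quotient.mk (Ideal.span {1 - e})
            (algebraMap R (AdicCompletion (Ideal.span {t}) R) t)) ∈ Ideal.span {Ideal.Quotient.mk (Ideal.span {1 - e})
            (algebraMap R (AdicCompletion (Ideal.span {t}) R) t)} := Ideal.subset_span rfl
      have hxn := Ideal.pow_mem_pow hx n
      exact mem_of_eq h3 (Ideal.mul_mem_right _ _ hxn)
  -- conjunct 3
  · intro n hn
    have hJmem : ∀ y, Ideal.Quotient.mk (Ideal.span {1 - e})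
        (algebraMap R (AdicCompletion (Ideal.span {t}) R) (t ^ n) * y) ∈
          Ideal.span {(Ideal.Quotient.mk (Ideal.span {1 - e})
            (algebraMap R (AdicCompletion (Ideal.span {t}) R) t)) ^ n} := by
      intro y
      have h3 : Ideal.Quotient.mk (Ideal.span {1 - e})
          (algebraMap R (AdicCompletion (Ideal.span {t}) R) (t ^ n) * y)
          = (Ideal.Quotient.mk (Ideal.span {1 - e})
              (algebraMap R (AdicCompletion (Ideal.span {t}) R) t)) ^ n
            * Ideal.Quotient.mk (Ideal.span {1 - e}) y := by
        rw [_root_.map_mul, _root_.map_pow, _root_.map_pow]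
      have hx : ((Ideal.Quotient.mk (Ideal.span {1 - e})
            (algebraMap R (AdicCompletion (Ideal.span {t}) R) t)) : AdicCompletion (Ideal.span {t}) R ⧸ Ideal.span {1 - e}) ^ n ∈
          Ideal.span {((Ideal.Quotient.mk (Ideal.span {1 - e})
            (algebraMap R (AdicCompletion (Ideal.span {t}) R) t)) : AdicCompletion (Ideal.span {t}) R ⧸ Ideal.span {1 - e}) ^ n} :=
        Ideal.subset_span rfl
      exact mem_of_eq h3 (Ideal.mul_mem_right _ _ hx)
    set ψ : R →+* (AdicCompletion (Ideal.span {t}) R ⧸ Ideal.span {1 - e}) ⧸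
        Ideal.span {(Ideal.Quotient.mk (Ideal.span {1 - e})
          (algebraMap R (AdicCompletion (Ideal.span {t}) R) t)) ^ n} :=
      (Ideal.Quotient.mk _).comp ((Ideal.Quotient.mk (Ideal.span {1 - e})).comp
        (algebraMap R (AdicCompletion (Ideal.span {t}) R) : R →+* _)) with hψ
    have hψr : ∀ r : R, ψ r
        = Ideal.Quotient.mk _ (Ideal.Quotient.mk (Ideal.span {1 - e})
            (algebraMap R (AdicCompletion (Ideal.span {t}) R) r)) := fun r => rfl
    have hsurj : Function.Surjective ψ := by
      intro q
      obtain ⟨cc, rfl⟩ := Ideal.Quotient.mk_surjective q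
      obtain ⟨x0, rfl⟩ := Ideal.Quotient.mk_surjective cc
      refine ⟨rlift x0 n, ?_⟩
      have h0 : eval (Ideal.span {t}) R n
          (x0 - algebraMap R (AdicCompletion (Ideal.span {t}) R) (rlift x0 n)) = 0 := by
        show (x0 - algebraMap R (AdicCompletion (Ideal.span {t}) R) (rlift x0 n)).val n = 0
        rw [val_sub_apply, algebraMap_val, rlift_spec, sub_self]
      obtain ⟨y, hy⟩ := exists_of_eval_eq_zero ht n _ h0
      rw [hψr]
      symm
      rw [Ideal.Quotient.eq]
      have h4 : Ideal.Quotient.mk (Ideal.span {1 - e}) x0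
          - Ideal.Quotient.mk (Ideal.span {1 - e})
            (algebraMap R (AdicCompletion (Ideal.span {t}) R) (rlift x0 n))
          = Ideal.Quotient.mk (Ideal.span {1 - e})
            (algebraMap R (AdicCompletion (Ideal.span {t}) R) (t ^ n) * y) := by
        rw [← _root_.map_sub, hy]
      exact mem_of_eq h4 (hJmem y)
    have hker : RingHom.ker ψ = Ideal.span {z ^ n} := by
      apply le_antisymm
      · intro r hr
        have hr2 : ψ r = 0 := hr
        rw [hψr, Ideal.Quotient.eq_zero_iff_mem] at hr2
        obtain ⟨u, hu⟩ := Ideal.mem_span_singleton.mp hr2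
        obtain ⟨a, rfl⟩ := Ideal.Quotient.mk_surjective u
        have h2 : Ideal.Quotient.mk (Ideal.span {1 - e})
            (algebraMap R (AdicCompletion (Ideal.span {t}) R) r
              - algebraMap R (AdicCompletion (Ideal.span {t}) R) (t ^ n) * a) = 0 := by
          have h3 : Ideal.Quotient.mk (Ideal.span {1 - e})
              (algebraMap R (AdicCompletion (Ideal.span {t}) R) (t ^ n) * a)
              = (Ideal.Quotient.mk (Ideal.span {1 - e})
                  (algebraMap R (AdicCompletion (Ideal.span {t}) R) t)) ^ n
                * Ideal.Quotient.mk (Ideal.span {1 - e}) a := by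
            rw [_root_.map_mul, _root_.map_pow, _root_.map_pow]
          rw [_root_.map_sub, h3, ← hu, sub_self]
        obtain ⟨v, hv⟩ := Ideal.mem_span_singleton.mp (Ideal.Quotient.eq_zero_iff_mem.mp h2)
        apply Hker n hn r
        refine ⟨e * a, ?_⟩
        linear_combination e * hv - v * he
      · have hz0 : ψ (z ^ n) = 0 := by
          rw [hψr]
          have h1 : Ideal.Quotient.mk (Ideal.span {1 - e})
              (algebraMap R (AdicCompletion (Ideal.span {t}) R) (z ^ n))
              = Ideal.Quotient.mk (Ideal.span {1 - e})
                (algebraMap R (AdicCompletion (Ideal.span {t}) R) (t ^ n) * cz n) := by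
            rw [← hcz n, hπ]
          rw [h1, Ideal.Quotient.eq_zero_iff_mem]
          exact hJmem (cz n)
        rw [Ideal.span_singleton_le_iff_mem]
        exact hz0
    refine ⟨(Ideal.quotEquivOfEq hker.symm).trans
      (RingHom.quotientKerEquivOfSurjective hsurj), ?_⟩
    intro r
    show (RingHom.quotientKerEquivOfSurjective hsurj)
        ((Ideal.quotEquivOfEq hker.symm) (Ideal.Quotient.mk (Ideal.span {z ^ n}) r)) = _
    have h1 : (Ideal.quotEquivOfEq hker.symm) (Ideal.Quotient.mk (Ideal.span {z ^ n}) r)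
        = Ideal.Quotient.mk (RingHom.ker ψ) r := Ideal.quotEquivOfEq_mk _ _
    rw [h1]
    have h2 : (RingHom.quotientKerEquivOfSurjective hsurj)
        (Ideal.Quotient.mk (RingHom.ker ψ) r) = ψ r := by
      exact RingHom.quotientKerEquivOfSurjective_apply_mk hsurj r
    rw [h2, hψr]

end Corner

end Stmt14Aux

set_option maxHeartbeats 1000000 in
set_option synthInstance.maxHeartbeats 400000 in
/-- (Standing completion setup.)  The ring homomorphism `f : R → eR̂`,
`r ↦ e·r̂` (with the corner ring `eR̂` realized as the quotient `R̂/(1−e)`) sends `z` to a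
topologically nilpotent element, and induces a (continuous) ring isomorphism from the
`(z)`-adic completion `R̂_z` of `R` onto `eR̂`.  Moreover, for each `n ≥ 1` the induced map
`R/(zⁿ) → eR̂/(e·τⁿ·R̂)` is an isomorphism, and the image of `e` in `R/(τⁿ)` equals the
idempotent `eₙ` corresponding to the projection onto `R/(zⁿ)` under the Chinese remainder
isomorphism `R/(τⁿ) ≅ R/(zⁿ) × R/(φ(z)ⁿ) × ⋯ × R/(φ^{l−1}(z)ⁿ)`, i.e. `eₙ ≡ 1 mod (zⁿ)` and
`eₙ ≡ 0 mod (φⁱ(z)ⁿ)` for `1 ≤ i ≤ l−1`. -/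
theorem statement14 (R : Type u) [CommRing R] (φ : R ≃+* R) (z b : R) (l : ℕ)
    (hz : z ∈ nonZeroDivisors R) (hb : IsNilpotent b) (hl : 1 ≤ l)
    (hφl : ∃ r : R, (φ ^ l) z - z = b * r)
    (hcop : ∀ i : ℕ, 1 ≤ i → i ≤ l - 1 → Ideal.span {z, (φ ^ i) z} = ⊤)
    (φhat : RHat R φ z l ≃+* RHat R φ z l)
    (hφhat : ∀ r : R, φhat (algebraMap R (RHat R φ z l) r) = algebraMap R (RHat R φ z l) (φ r))
    (hφcont : ∀ n : ℕ, ∃ m : ℕ, ∀ x : RHat R φ z l,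
      RHat.proj R φ z l m x = 0 → RHat.proj R φ z l n (φhat x) = 0)
    (e : RHat R φ z l) (he : e * e = e)
    (heval : ∃ r : R, RHat.proj R φ z l 1 e = Submodule.Quotient.mk r ∧
      r - 1 ∈ Ideal.span {z} ∧
      ∀ i : ℕ, 1 ≤ i → i ≤ l - 1 → r ∈ Ideal.span {(φ ^ i) z}) :
    (∀ n : ℕ, ∃ m : ℕ,
      (Ideal.Quotient.mk (Ideal.span {1 - e}) (algebraMap R (RHat R φ z l) z)) ^ m ∈
        (Ideal.span {Ideal.Quotient.mk (Ideal.span {1 - e})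
          (algebraMap R (RHat R φ z l) (gwaTau R φ z l))}) ^ n) ∧
    (∃ g : AdicCompletion (Ideal.span {z}) R ≃+*
        (RHat R φ z l ⧸ Ideal.span {1 - e}),
      (∀ r : R, g (algebraMap R (AdicCompletion (Ideal.span {z}) R) r) =
        Ideal.Quotient.mk (Ideal.span {1 - e}) (algebraMap R (RHat R φ z l) r)) ∧
      (∀ n : ℕ, ∃ m : ℕ, ∀ x : AdicCompletion (Ideal.span {z}) R,
        AdicCompletion.eval (Ideal.span {z}) R m x = 0 →
          g x ∈ (Ideal.span {Ideal.Quotient.mk (Ideal.span {1 - e})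
            (algebraMap R (RHat R φ z l) (gwaTau R φ z l))}) ^ n)) ∧
    (∀ n : ℕ, 1 ≤ n →
      ∃ gn : (R ⧸ Ideal.span {z ^ n}) ≃+*
          ((RHat R φ z l ⧸ Ideal.span {1 - e}) ⧸
            Ideal.span {(Ideal.Quotient.mk (Ideal.span {1 - e})
              (algebraMap R (RHat R φ z l) (gwaTau R φ z l))) ^ n}),
        ∀ r : R, gn (Ideal.Quotient.mk (Ideal.span {z ^ n}) r) =
          Ideal.Quotient.mk _ (Ideal.Quotient.mk (Ideal.span {1 - e})
            (algebraMap R (RHat R φ z l) r))) ∧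
    (∀ n : ℕ, 1 ≤ n → ∃ r : R,
      RHat.proj R φ z l n e = Submodule.Quotient.mk r ∧
      r - 1 ∈ Ideal.span {z ^ n} ∧
      ∀ i : ℕ, 1 ≤ i → i ≤ l - 1 → r ∈ Ideal.span {((φ ^ i) z) ^ n}) := by
  classical
  obtain ⟨r, hre, hr1, hri⟩ := heval
  have hre' : e.val 1 = (Submodule.Quotient.mk r :
      R ⧸ ((Ideal.span {gwaTau R φ z l}) ^ 1 • ⊤ : Submodule R R)) := hre
  have hφnzd : ∀ k : ℕ, (φ ^ k) z ∈ nonZeroDivisors R := by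
    intro k; rw [mem_nonZeroDivisors_iff_right]; intro a ha
    have h1 : (φ ^ k).symm (a * (φ ^ k) z) = 0 := by rw [ha, map_zero]
    rw [map_mul, RingEquiv.symm_apply_apply] at h1
    have h2 := mem_nonZeroDivisors_iff_right.mp hz _ h1
    have h3 := congrArg (φ ^ k) h2
    rwa [RingEquiv.apply_symm_apply, map_zero] at h3
  have hτnzd : gwaTau R φ z l ∈ nonZeroDivisors R :=
    show (∏ i ∈ Finset.range l, (φ ^ i) z) ∈ nonZeroDivisors R from
      prod_mem fun i _ => hφnzd i
  have hw : gwaTau R φ z l = (∏ i ∈ Finset.range (l - 1), (φ ^ (i + 1)) z) * z := by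
    obtain ⟨m, rfl⟩ : ∃ m, l = m + 1 := ⟨l - 1, by omega⟩
    show (∏ i ∈ Finset.range (m + 1), (φ ^ i) z) = _
    rw [Finset.prod_range_succ']
    have h9 : (1 : R ≃+* R) z = z := rfl
    simp [h9]
  have hzdvdτ : z ∣ gwaTau R φ z l :=
    ⟨∏ i ∈ Finset.range (l - 1), (φ ^ (i + 1)) z, by rw [hw]; ring⟩
  have hφdvdτ : ∀ i : ℕ, i < l → (φ ^ i) z ∣ gwaTau R φ z l := fun i hi =>
    Finset.dvd_prod_of_mem (fun j => (φ ^ j) z) (Finset.mem_range.mpr hi)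
  -- e = r̂ + τ̂ * a
  have h0 : AdicCompletion.eval (Ideal.span {gwaTau R φ z l}) R 1
      (e - algebraMap R (RHat R φ z l) r) = 0 := by
    show (e - algebraMap R (RHat R φ z l) r).val 1 = 0
    rw [AdicCompletion.val_sub_apply, Stmt14Aux.algebraMap_val, hre', sub_self]
  obtain ⟨a, ha⟩ := Stmt14Aux.exists_of_eval_eq_zero hτnzd 1 _ h0
  rw [pow_one] at ha
  -- pairwise coprimality
  have hpair : ∀ i j : ℕ, i < j → j < l - 1 →
      IsCoprime ((φ ^ (i + 1)) z) ((φ ^ (j + 1)) z) := by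
    intro i j hij hjl
    have h1 := hcop (j - i) (by omega) (by omega)
    have h2 : IsCoprime z ((φ ^ (j - i)) z) := by
      have hone : (1 : R) ∈ Ideal.span {z, (φ ^ (j - i)) z} := h1 ▸ Submodule.mem_top
      obtain ⟨u, v, huv⟩ := Ideal.mem_span_pair.mp hone
      exact ⟨u, v, huv⟩
    obtain ⟨u, v, huv⟩ := h2
    have h4 : (φ ^ (i + 1)) ((φ ^ (j - i)) z) = (φ ^ (j + 1)) z := by
      have h5 : φ ^ (i + 1) * φ ^ (j - i) = φ ^ (j + 1) := by
        rw [← pow_add]; congr 1; omega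
      rw [← h5]; rfl
    refine ⟨(φ ^ (i + 1)) u, (φ ^ (i + 1)) v, ?_⟩
    have h6 := congrArg (φ ^ (i + 1)) huv
    rwa [map_add, map_mul, map_mul, map_one, h4] at h6
  have hcw : (∏ i ∈ Finset.range (l - 1), (φ ^ (i + 1)) z) ∣ r := by
    apply Finset.prod_dvd_of_coprime
    · intro i hi j hj hij
      simp only [Finset.coe_range, Set.mem_Iio] at hi hj
      rcases lt_or_gt_of_ne hij with h | h
      · exact hpair i j h hj
      · exact (hpair j i h hi).symm
    · intro i hi
      exact Ideal.mem_span_singleton.mp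
        (hri (i + 1) (by omega) (by have := Finset.mem_range.mp hi; omega))
  obtain ⟨s, hs⟩ := hcw
  -- H1
  have H1 : ∃ c, e * algebraMap R (RHat R φ z l) z
      = algebraMap R (RHat R φ z l) (gwaTau R φ z l) * c := by
    refine ⟨e * algebraMap R (RHat R φ z l) s
      + e * (a * algebraMap R (RHat R φ z l) z), ?_⟩
    have heq : e = algebraMap R (RHat R φ z l) r
        + algebraMap R (RHat R φ z l) (gwaTau R φ z l) * a := by
      linear_combination ha
    have h1 : algebraMap R (RHat R φ z l) r * algebraMap R (RHat R φ z l) z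
        = algebraMap R (RHat R φ z l) (gwaTau R φ z l)
          * algebraMap R (RHat R φ z l) s := by
      rw [← _root_.map_mul, ← _root_.map_mul]
      congr 1
      rw [hs, hw]; ring
    linear_combination (algebraMap R (RHat R φ z l) z * e) * heq
      - (algebraMap R (RHat R φ z l) z) * he + e * h1
  -- conjunct 4
  have hC4 : ∀ n : ℕ, 1 ≤ n → ∃ rn : R,
      e.val n = (Submodule.Quotient.mk rn :
        R ⧸ ((Ideal.span {gwaTau R φ z l}) ^ n • ⊤ : Submodule R R)) ∧
      rn - 1 ∈ Ideal.span {z ^ n} ∧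
      ∀ i : ℕ, 1 ≤ i → i ≤ l - 1 → rn ∈ Ideal.span {((φ ^ i) z) ^ n} := by
    intro n hn
    obtain ⟨rn, hrn⟩ := Submodule.Quotient.mk_surjective _ (e.val n)
    have hidem : rn * rn - rn ∈ Ideal.span {(gwaTau R φ z l) ^ n} := by
      have h1 : (Submodule.Quotient.mk (rn * rn) :
          R ⧸ ((Ideal.span {gwaTau R φ z l}) ^ n • ⊤ : Submodule R R))
          = Submodule.Quotient.mk rn := by
        rw [← Stmt14Aux.mk_mul, hrn]
        calc e.val n * e.val n = (e * e).val n := (AdicCompletion.val_mul _ n e e).symm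
          _ = e.val n := by rw [he]
      have h2 := (Submodule.Quotient.eq _).mp h1
      rwa [Stmt14Aux.smul_top_singleton] at h2
    have hrnr : rn - r ∈ Ideal.span {gwaTau R φ z l} := by
      have h6 := e.2 hn
      rw [← hrn, AdicCompletion.transitionMap_mk] at h6
      have h1 : (Submodule.Quotient.mk rn :
          R ⧸ ((Ideal.span {gwaTau R φ z l}) ^ 1 • ⊤ : Submodule R R))
          = Submodule.Quotient.mk r := by rw [h6, hre']
      have h2 := (Submodule.Quotient.eq _).mp h1
      rwa [Stmt14Aux.smul_top_singleton, pow_one] at h2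
    refine ⟨rn, hrn.symm, ?_, ?_⟩
    · have hu : (1 - rn) ∈ Ideal.span {z ^ n} := by
        apply Stmt14Aux.pow_trick (Ideal.span {z ^ n}) (1 - rn) z n hn
        · have h3 : (1 - rn) * (1 - rn) - (1 - rn) = rn * rn - rn := by ring
          rw [h3]
          exact Ideal.span_singleton_le_span_singleton.mpr
            (pow_dvd_pow_of_dvd hzdvdτ n) hidem
        · exact Ideal.subset_span rfl
        · obtain ⟨d1, hd1⟩ := Ideal.mem_span_singleton.mp hr1
          obtain ⟨d2, hd2⟩ := Ideal.mem_span_singleton.mp hrnr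
          obtain ⟨wq, hwq⟩ := hzdvdτ
          refine ⟨-(d1 + wq * d2), ?_⟩
          rw [hwq] at hd2
          linear_combination -hd1 - hd2
      have h8 : rn - 1 = -(1 - rn) := by ring
      rw [h8]; exact neg_mem hu
    · intro i hi1 hil
      apply Stmt14Aux.pow_trick (Ideal.span {((φ ^ i) z) ^ n}) rn ((φ ^ i) z) n hn
      · exact Ideal.span_singleton_le_span_singleton.mpr
          (pow_dvd_pow_of_dvd (hφdvdτ i (by omega)) n) hidem
      · exact Ideal.subset_span rfl
      · obtain ⟨d2, hd2⟩ := Ideal.mem_span_singleton.mp hrnr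
        obtain ⟨u1, hu1⟩ := Ideal.mem_span_singleton.mp (hri i hi1 hil)
        obtain ⟨u2, hu2⟩ := hφdvdτ i (by omega)
        refine ⟨u1 + u2 * d2, ?_⟩
        rw [hu2] at hd2
        linear_combination hd2 + hu1
  -- Hker
  have Hker : ∀ n : ℕ, 1 ≤ n → ∀ rr : R,
      (∃ aa, e * algebraMap R (RHat R φ z l) rr
          = algebraMap R (RHat R φ z l) ((gwaTau R φ z l) ^ n) * aa) →
      rr ∈ Ideal.span {z ^ n} := by
    rintro n hn rr ⟨aa, haa⟩
    obtain ⟨rn, hrn, hrn1, -⟩ := hC4 n hn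
    have h1 : (e * algebraMap R (RHat R φ z l) rr).val n
        = Submodule.Quotient.mk (rn * rr) := by
      rw [AdicCompletion.val_mul, Stmt14Aux.algebraMap_val, hrn, Stmt14Aux.mk_mul]
    have h2 : (algebraMap R (RHat R φ z l) ((gwaTau R φ z l) ^ n) * aa).val n = 0 := by
      rw [AdicCompletion.val_mul, Stmt14Aux.algebraMap_val,
        Stmt14Aux.mk_pow_eq_zero, zero_mul]
    have h3 : (Submodule.Quotient.mk (rn * rr) :
        R ⧸ ((Ideal.span {gwaTau R φ z l}) ^ n • ⊤ : Submodule R R)) = 0 := by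
      rw [← h1, haa, h2]
    have h4 := (Submodule.Quotient.mk_eq_zero _).mp h3
    rw [Stmt14Aux.smul_top_singleton] at h4
    have h5 : rn * rr ∈ Ideal.span {z ^ n} :=
      Ideal.span_singleton_le_span_singleton.mpr (pow_dvd_pow_of_dvd hzdvdτ n) h4
    have h6 : (rn - 1) * rr ∈ Ideal.span {z ^ n} := Ideal.mul_mem_right _ _ hrn1
    have h7 : rr = rn * rr - (rn - 1) * rr := by ring
    rw [h7]; exact sub_mem h5 h6
  obtain ⟨c1g, c2g, c3g⟩ :=
    Stmt14Aux.corner (gwaTau R φ z l) z hτnzd hzdvdτ e he H1 Hker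
  refine ⟨c1g, c2g, c3g, ?_⟩
  intro n hn
  obtain ⟨rn, hrn, h1, h2⟩ := hC4 n hn
  exact ⟨rn, hrn, h1, h2⟩
end

section
/- Let R be a ring, b ∈ Z(R) a nilpotent central element, l ≥ 1, z ∈ Z(R) a central non-zero-divisor, and φ a ring automorphism of R with φ^l(z) − z ∈ bR. Then for every left module M over the generalized Weyl algebra H(R, φ^l, z) on which the generator x acts locally nilpotently, the element z acts locally nilpotently on M: for every m ∈ M there exists n with zⁿ·m = 0. -/
universe u

variable (R : Type u) [Ring R] (φ : R ≃+* R) (z : R)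

/-- The defining relations of the generalized Weyl algebra `H(R, φ, z)`, presented as a quotient
of the free `ℤ`-algebra on the underlying set of `R` together with two generators `x` (encoded
as `Sum.inr 0`) and `y` (encoded as `Sum.inr 1`).  The first three families of relations encode
the ring structure of `R`; the remaining ones are the GWA relations
`yx = z`, `xy = φ⁻¹(z)`, `xr = φ⁻¹(r)x`, `yr = φ(r)y`. -/
inductive GWARel : FreeAlgebra ℤ (R ⊕ Fin 2) → FreeAlgebra ℤ (R ⊕ Fin 2) → Prop
  | add (r s : R) : GWARel
      (FreeAlgebra.ι ℤ (Sum.inl r) + FreeAlgebra.ι ℤ (Sum.inl s))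
      (FreeAlgebra.ι ℤ (Sum.inl (r + s)))
  | mul (r s : R) : GWARel
      (FreeAlgebra.ι ℤ (Sum.inl r) * FreeAlgebra.ι ℤ (Sum.inl s))
      (FreeAlgebra.ι ℤ (Sum.inl (r * s)))
  | one : GWARel (FreeAlgebra.ι ℤ (Sum.inl (1 : R))) 1
  | yx : GWARel (FreeAlgebra.ι ℤ (Sum.inr 1) * FreeAlgebra.ι ℤ (Sum.inr 0))
      (FreeAlgebra.ι ℤ (Sum.inl z))
  | xy : GWARel (FreeAlgebra.ι ℤ (Sum.inr 0) * FreeAlgebra.ι ℤ (Sum.inr 1))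
      (FreeAlgebra.ι ℤ (Sum.inl (φ.symm z)))
  | xr (r : R) : GWARel (FreeAlgebra.ι ℤ (Sum.inr 0) * FreeAlgebra.ι ℤ (Sum.inl r))
      (FreeAlgebra.ι ℤ (Sum.inl (φ.symm r)) * FreeAlgebra.ι ℤ (Sum.inr 0))
  | yr (r : R) : GWARel (FreeAlgebra.ι ℤ (Sum.inr 1) * FreeAlgebra.ι ℤ (Sum.inl r))
      (FreeAlgebra.ι ℤ (Sum.inl (φ r)) * FreeAlgebra.ι ℤ (Sum.inr 1))

/-- The generalized Weyl algebra `H(R, φ, z)`. -/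
abbrev GWA : Type u := RingQuot (GWARel R φ z)

/-- The generator `x` of the generalized Weyl algebra. -/
noncomputable def GWA.X : GWA R φ z :=
  RingQuot.mkRingHom (GWARel R φ z) (FreeAlgebra.ι ℤ (Sum.inr 0))

/-- The generator `y` of the generalized Weyl algebra. -/
noncomputable def GWA.Y : GWA R φ z :=
  RingQuot.mkRingHom (GWARel R φ z) (FreeAlgebra.ι ℤ (Sum.inr 1))

/-- The canonical ring homomorphism `R → H(R, φ, z)`. -/
noncomputable def GWA.ofBase : R →+* GWA R φ z where
  toFun r := RingQuot.mkRingHom (GWARel R φ z) (FreeAlgebra.ι ℤ (Sum.inl r))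
  map_one' := by
    have := RingQuot.mkRingHom_rel (GWARel.one (R := R) (φ := φ) (z := z))
    simpa using this
  map_mul' r s := by
    have := RingQuot.mkRingHom_rel (GWARel.mul (φ := φ) (z := z) r s)
    simp only [map_mul] at this
    exact this.symm
  map_zero' := by
    have := RingQuot.mkRingHom_rel (GWARel.add (φ := φ) (z := z) 0 0)
    simp only [map_add, add_zero] at this
    exact add_eq_left.mp this
  map_add' r s := by
    have := RingQuot.mkRingHom_rel (GWARel.add (φ := φ) (z := z) r s)
    simp only [map_add] at this
    exact this.symm



section NilAux

variable {R : Type u} [Ring R]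

lemma center_list_prod (L : List R) (h : ∀ x ∈ L, x ∈ Set.center R) :
    L.prod ∈ Set.center R := by
  induction L with
  | nil => simpa using Set.one_mem_center
  | cons a t ih =>
      rw [List.prod_cons]
      exact Set.mul_mem_center (h a (by simp)) (ih fun x hx => h x (by simp [hx]))

lemma ringEquiv_center (ψ : R ≃+* R) {a : R} (ha : a ∈ Set.center R) :
    ψ a ∈ Set.center R := by
  rw [Semigroup.mem_center_iff] at ha ⊢
  intro g
  conv_lhs => rw [← ψ.apply_symm_apply g]
  rw [← map_mul, ha, map_mul, ψ.apply_symm_apply]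

lemma count_pow_factor {n : ℕ} (Bf : Fin n → R) (hc : ∀ j, Bf j ∈ Set.center R)
    (t : List (Fin n)) (i : Fin n) :
    ∃ q : R, (t.map Bf).prod = (Bf i) ^ (t.count i) * q := by
  induction t with
  | nil => exact ⟨1, by simp⟩
  | cons a t ih =>
      obtain ⟨q, hq⟩ := ih
      by_cases hai : a = i
      · subst hai
        refine ⟨q, ?_⟩
        rw [List.map_cons, List.prod_cons, hq, List.count_cons_self, pow_succ',
          mul_assoc]
      · refine ⟨Bf a * q, ?_⟩
        have hcomm : Commute (Bf i) (Bf a) :=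
          ((Semigroup.mem_center_iff.mp (hc i)) (Bf a)).symm
        rw [List.map_cons, List.prod_cons, hq, List.count_cons_of_ne hai,
          ← mul_assoc, ← (hcomm.pow_left _).eq, mul_assoc]

lemma fin_sum_count {n : ℕ} (t : List (Fin n)) :
    ∑ i : Fin n, t.count i = t.length := by
  classical
  have h1 : ∑ a ∈ (t : Multiset (Fin n)).toFinset, (t : Multiset (Fin n)).count a
      = Multiset.card (t : Multiset (Fin n)) := Multiset.toFinset_sum_count_eq _
  have h2 : ∑ a ∈ (t : Multiset (Fin n)).toFinset, (t : Multiset (Fin n)).count a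
      = ∑ a : Fin n, (t : Multiset (Fin n)).count a :=
    Finset.sum_subset (Finset.subset_univ _) (fun x _ hx => by
      simpa [Multiset.count_eq_zero, List.count_eq_zero] using hx)
  rw [h2] at h1
  simpa using h1

lemma key_nil (n N : ℕ) (hn : 1 ≤ n) (hN : 1 ≤ N) (B : ℕ → R)
    (hc : ∀ i, B i ∈ Set.center R) (hnil : ∀ i, B i ^ N = 0) (d : R)
    (hd : d ∈ AddSubgroup.closure {x : R | ∃ i < n, ∃ s : R, x = B i * s}) :
    d ^ (n * N) = 0 := by
  classical
  set Bf : Fin n → R := fun j => B j.val with hBf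
  have hcf : ∀ j : Fin n, Bf j ∈ Set.center R := fun j => hc j.val
  set Sgen : ℕ → Set R := fun k =>
    {x | ∃ t : List (Fin n), ∃ u : R, t.length = k ∧ x = (t.map Bf).prod * u}
    with hSgen
  have hstep : ∀ k : ℕ, ∀ x ∈ AddSubgroup.closure (Sgen k),
      d * x ∈ AddSubgroup.closure (Sgen (k + 1)) := by
    intro k x hx
    induction hx using AddSubgroup.closure_induction with
    | mem g hg =>
        obtain ⟨t, u, ht, rfl⟩ := hg
        induction hd using AddSubgroup.closure_induction with
        | mem w hw =>
            obtain ⟨i, hi, s, rfl⟩ := hw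
            have hP : (t.map Bf).prod ∈ Set.center R :=
              center_list_prod _ (by
                intro x hx
                simp only [List.mem_map] at hx
                obtain ⟨j, _, rfl⟩ := hx
                exact hcf j)
            apply AddSubgroup.subset_closure
            refine ⟨⟨i, hi⟩ :: t, s * u, by simp [ht], ?_⟩
            have hsP : s * (t.map Bf).prod = (t.map Bf).prod * s :=
              Semigroup.mem_center_iff.mp hP s
            calc B i * s * ((t.map Bf).prod * u)
                = B i * (s * (t.map Bf).prod * u) := by
                  rw [mul_assoc, ← mul_assoc s]
              _ = B i * ((t.map Bf).prod * s * u) := by rw [hsP]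
              _ = (B i * (t.map Bf).prod) * (s * u) := by
                  rw [mul_assoc ((t.map Bf).prod), ← mul_assoc]
              _ = ((⟨i, hi⟩ :: t : List (Fin n)).map Bf).prod * (s * u) := by
                  rw [List.map_cons, List.prod_cons]
        | zero => simp only [zero_mul]; exact (AddSubgroup.closure _).zero_mem
        | add a b _ _ pa pb =>
            rw [add_mul]; exact (AddSubgroup.closure _).add_mem pa pb
        | neg a _ pa =>
            rw [neg_mul]; exact (AddSubgroup.closure _).neg_mem pa
    | zero => simp only [mul_zero]; exact (AddSubgroup.closure _).zero_mem
    | add a bb _ _ pa pb =>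
        rw [mul_add]; exact (AddSubgroup.closure _).add_mem pa pb
    | neg a _ pa =>
        rw [mul_neg]; exact (AddSubgroup.closure _).neg_mem pa
  have hpow : ∀ k : ℕ, d ^ k ∈ AddSubgroup.closure (Sgen k) := by
    intro k
    induction k with
    | zero =>
        apply AddSubgroup.subset_closure
        exact ⟨[], 1, rfl, by simp⟩
    | succ k ih =>
        rw [pow_succ']
        exact hstep k _ ih
  have hzero : ∀ x ∈ Sgen (n * N), x = 0 := by
    rintro x ⟨t, u, ht, rfl⟩
    have hpig : ∃ i : Fin n, N ≤ t.count i := by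
      by_contra hcon
      push_neg at hcon
      have hle : ∑ i : Fin n, t.count i ≤ ∑ _i : Fin n, (N - 1) :=
        Finset.sum_le_sum fun i _ => Nat.le_sub_one_of_lt (hcon i)
      rw [fin_sum_count, ht, Finset.sum_const, Finset.card_univ, Fintype.card_fin,
        smul_eq_mul] at hle
      have hlt : n * (N - 1) < n * N := by
        have h' : N - 1 < N := Nat.sub_lt hN one_pos
        exact mul_lt_mul_of_pos_left h' (by omega)
      omega
    obtain ⟨i, hi⟩ := hpig
    obtain ⟨q, hq⟩ := count_pow_factor Bf hcf t i
    have hz2 : (Bf i) ^ (t.count i) = 0 := by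
      have h3 : (Bf i) ^ (t.count i) = (Bf i) ^ N * (Bf i) ^ (t.count i - N) := by
        rw [← pow_add, Nat.add_sub_cancel' hi]
      rw [h3]
      have := hnil i.val
      rw [show (Bf i) = B i.val from rfl, this, zero_mul]
    rw [hq, hz2, zero_mul, zero_mul]
  have hbot : AddSubgroup.closure (Sgen (n * N)) ≤ ⊥ := by
    rw [AddSubgroup.closure_le]
    intro x hx
    simpa using hzero x hx
  simpa using hbot (hpow (n * N))

end NilAux

section GWAAux

variable {S : Type u} [Ring S]

/-- Additive subgroup spanned by `ψ^i(b) * s`, `i < n`. -/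
def gwaJ (ψ : S ≃+* S) (b : S) (n : ℕ) : AddSubgroup S :=
  AddSubgroup.closure {x : S | ∃ i < n, ∃ s : S, x = (ψ ^ i) b * s}

lemma gwaJ_mul {ψ : S ≃+* S} {b : S} {n : ℕ} {d : S} (hd : d ∈ gwaJ ψ b n) (s : S) :
    d * s ∈ gwaJ ψ b n := by
  induction hd using AddSubgroup.closure_induction with
  | mem w hw =>
      obtain ⟨i, hi, t, rfl⟩ := hw
      exact AddSubgroup.subset_closure ⟨i, hi, t * s, by rw [mul_assoc]⟩
  | zero => rw [zero_mul]; exact (gwaJ ψ b n).zero_mem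
  | add a c _ _ pa pc => rw [add_mul]; exact (gwaJ ψ b n).add_mem pa pc
  | neg a _ pa => rw [neg_mul]; exact (gwaJ ψ b n).neg_mem pa

lemma gwaJ_map {ψ : S ≃+* S} {b : S} {n : ℕ} {d : S} (hd : d ∈ gwaJ ψ b n) :
    ψ d ∈ gwaJ ψ b (n + 1) := by
  induction hd using AddSubgroup.closure_induction with
  | mem w hw =>
      obtain ⟨i, hi, t, rfl⟩ := hw
      refine AddSubgroup.subset_closure ⟨i + 1, by omega, ψ t, ?_⟩
      rw [map_mul]
      congr 1
      rw [pow_succ']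
      rfl
  | zero => rw [map_zero]; exact (gwaJ ψ b (n + 1)).zero_mem
  | add a c _ _ pa pc => rw [map_add]; exact (gwaJ ψ b (n + 1)).add_mem pa pc
  | neg a _ pa => rw [map_neg]; exact (gwaJ ψ b (n + 1)).neg_mem pa

lemma gwaJ_mono {ψ : S ≃+* S} {b : S} {m n : ℕ} (h : m ≤ n) :
    gwaJ ψ b m ≤ gwaJ ψ b n := by
  apply AddSubgroup.closure_mono
  rintro x ⟨i, hi, s, rfl⟩
  exact ⟨i, by omega, s, rfl⟩

lemma gwaJ_zpow {ψ : S ≃+* S} {b : S} {z r₀ : S} (hz : z ∈ Set.center S)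
    (hbr : ψ z - z = b * r₀) : ∀ k : ℕ, ψ (z ^ k) - z ^ k ∈ gwaJ ψ b 1 := by
  intro k
  induction k with
  | zero => simpa using (gwaJ ψ b 1).zero_mem
  | succ k ih =>
      have key : ψ (z ^ (k + 1)) - z ^ (k + 1)
          = (ψ (z ^ k) - z ^ k) * ψ z + z ^ k * (ψ z - z) := by
        rw [pow_succ, map_mul]
        noncomm_ring
      rw [key]
      refine (gwaJ ψ b 1).add_mem (gwaJ_mul ih _) ?_
      have h0 : (ψ ^ (0 : ℕ)) b = b := by rw [pow_zero]; rfl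
      have hcom : Commute (b * r₀) (z ^ k) :=
        Commute.pow_right (Semigroup.mem_center_iff.mp hz (b * r₀)) k
      have h2 : z ^ k * (ψ z - z) = (ψ ^ (0 : ℕ)) b * (r₀ * z ^ k) := by
        rw [hbr, h0, ← hcom.eq, mul_assoc]
      rw [h2]
      exact AddSubgroup.subset_closure ⟨0, by omega, r₀ * z ^ k, rfl⟩

/-- The sequence `p n = ψ^{n-1}(z) ⋯ ψ(z) z`. -/
def gwaP (ψ : S ≃+* S) (w : S) : ℕ → S
  | 0 => 1
  | k + 1 => ψ (gwaP ψ w k) * w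

lemma gwaP_central {ψ : S ≃+* S} {w : S} (hw : w ∈ Set.center S) :
    ∀ n, gwaP ψ w n ∈ Set.center S := by
  intro n
  induction n with
  | zero => exact Set.one_mem_center
  | succ k ih => exact Set.mul_mem_center (ringEquiv_center ψ ih) hw

lemma gwaP_sub_mem {ψ : S ≃+* S} {b z r₀ : S} (hz : z ∈ Set.center S)
    (hbr : ψ z - z = b * r₀) : ∀ n, gwaP ψ z n - z ^ n ∈ gwaJ ψ b n := by
  intro n
  induction n with
  | zero => simpa [gwaP] using (gwaJ ψ b 0).zero_mem
  | succ k ih =>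
      have key : gwaP ψ z (k + 1) - z ^ (k + 1)
          = ψ (gwaP ψ z k - z ^ k) * z + (ψ (z ^ k) - z ^ k) * z := by
        show ψ (gwaP ψ z k) * z - z ^ (k + 1) = _
        rw [pow_succ, map_sub]
        noncomm_ring
      rw [key]
      exact (gwaJ ψ b (k + 1)).add_mem (gwaJ_mul (gwaJ_map ih) _)
        (gwaJ_mul (gwaJ_mono (by omega) (gwaJ_zpow hz hbr k)) _)

end GWAAux

section GWARelLemmas

lemma GWA.Y_mul_X : GWA.Y R φ z * GWA.X R φ z = GWA.ofBase R φ z z := by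
  have h := RingQuot.mkRingHom_rel (GWARel.yx (R := R) (φ := φ) (z := z))
  rw [map_mul] at h
  exact h

lemma GWA.Y_mul_base (r : R) :
    GWA.Y R φ z * GWA.ofBase R φ z r = GWA.ofBase R φ z (φ r) * GWA.Y R φ z := by
  have h := RingQuot.mkRingHom_rel (GWARel.yr (R := R) (φ := φ) (z := z) r)
  rw [map_mul, map_mul] at h
  exact h

lemma GWA.Y_pow_mul_X_pow (n : ℕ) :
    GWA.Y R φ z ^ n * GWA.X R φ z ^ n = GWA.ofBase R φ z (gwaP φ z n) := by
  induction n with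
  | zero => simp [gwaP]
  | succ k ih =>
      have h1 : GWA.Y R φ z ^ (k + 1) * GWA.X R φ z ^ (k + 1)
          = GWA.Y R φ z * ((GWA.Y R φ z ^ k * GWA.X R φ z ^ k) * GWA.X R φ z) := by
        rw [pow_succ', pow_succ, mul_assoc, ← mul_assoc (GWA.Y R φ z ^ k)]
      rw [h1, ih, ← mul_assoc, GWA.Y_mul_base, mul_assoc, GWA.Y_mul_X, ← map_mul]
      rfl

end GWARelLemmas

/-- Let `R` be a ring, `b` a nilpotent central element, `l ≥ 1`, `z` a central
non-zero-divisor, and `φ` a ring automorphism of `R` with `φ^l(z) − z ∈ bR`.  Then for every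
left module `M` over the generalized Weyl algebra `H(R, φ^l, z)` on which the generator `x`
acts locally nilpotently, the element `z` acts locally nilpotently on `M`. -/
theorem statement15 (b : R) (hb : b ∈ Set.center R) (hbnil : IsNilpotent b)
    (l : ℕ) (hl : 1 ≤ l) (hz : z ∈ Set.center R)
    (hznzd : (∀ r : R, r * z = 0 → r = 0) ∧ (∀ r : R, z * r = 0 → r = 0))
    (hφl : ∃ r : R, (φ ^ l) z - z = b * r)
    (M : Type u) [AddCommGroup M] [Module (GWA R (φ ^ l) z) M]
    (hM : ∀ m : M, ∃ n : ℕ, (GWA.X R (φ ^ l) z) ^ n • m = 0) :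
    ∀ m : M, ∃ n : ℕ, (GWA.ofBase R (φ ^ l) z z) ^ n • m = 0 := by
  obtain ⟨r₀, hbr⟩ := hφl
  obtain ⟨N₀, hN₀⟩ := hbnil
  have hbN : b ^ (N₀ + 1) = 0 := by rw [pow_succ, hN₀, zero_mul]
  intro m
  obtain ⟨n₀, hx0⟩ := hM m
  have hx : (GWA.X R (φ ^ l) z) ^ (n₀ + 1) • m = 0 := by
    rw [pow_succ', mul_smul, hx0, smul_zero]
  set n := n₀ + 1 with hn
  set N := N₀ + 1 with hNdef
  set d : R := z ^ n - gwaP (φ ^ l) z n with hd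
  have hdJ : d ∈ gwaJ (φ ^ l) b n := by
    have h' := (gwaJ (φ ^ l) b n).neg_mem (gwaP_sub_mem hz hbr n)
    rwa [neg_sub] at h'
  have hdnil : d ^ (n * N) = 0 := by
    refine key_nil n N (by omega) (by omega) (fun i => ((φ ^ l) ^ i) b)
      (fun i => ringEquiv_center _ hb) (fun i => by rw [← map_pow, hbN, map_zero]) d ?_
    exact hdJ
  set e := GWA.ofBase R (φ ^ l) z z with he
  set c := GWA.ofBase R (φ ^ l) z d with hc
  have hzd : z * d = d * z := (Semigroup.mem_center_iff.mp hz d).symm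
  have hce : Commute e c := by
    show e * c = c * e
    rw [he, hc, ← map_mul, ← map_mul, hzd]
  have h1 : e ^ n • m = c • m := by
    have hen : e ^ n = GWA.Y R (φ ^ l) z ^ n * GWA.X R (φ ^ l) z ^ n + c := by
      rw [he, hc, ← map_pow, GWA.Y_pow_mul_X_pow, ← map_add]
      congr 1
      rw [hd, add_sub_cancel]
    rw [hen, add_smul, mul_smul, hx, smul_zero, zero_add]
  have hiter : ∀ k : ℕ, e ^ (n * k) • m = (c ^ k) • m := by
    intro k
    induction k with
    | zero => simp
    | succ k ih =>
        have hsplit : e ^ (n * (k + 1)) = e ^ (n * k) * e ^ n := by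
          rw [← pow_add, Nat.mul_succ]
        have hcomm : e ^ (n * k) * c = c * e ^ (n * k) :=
          ((hce.symm).pow_right (n * k)).eq.symm
        rw [hsplit, mul_smul, h1, ← mul_smul, hcomm, mul_smul, ih, ← mul_smul,
          ← pow_succ']
  refine ⟨n * (n * N), ?_⟩
  have hcp : c ^ (n * N) = 0 := by
    rw [hc, ← map_pow, hdnil, map_zero]
  rw [hiter (n * N), hcp, zero_smul]
end
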